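/- For any Z ⊆ X, φ ∈ C(X,ℝ), and θ ∈ (0,1], the lower and upper θ-intermediate topological pressures of the closure of Z equal those of Z: P̲(f, Z̄, φ, θ) = P̲(f, Z, φ, θ) and P̄(f, Z̄, φ, θ) = P̄(f, Z, φ, θ). -/

import Mathlib

open Filter Topology Set ENNReal NNReal MeasureTheory

namespace NDSPressure

variable {X : Type*} [MetricSpace X]

/-- `traj f j = f_j ∘ ⋯ ∘ f_1` (with `traj f 0 = id`), the time-`j` map of the
nonautonomous system `f = {f_i}_{i ≥ 1}`. -/
def traj (f : ℕ → X → X) : ℕ → X → X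
  | 0 => id
  | n + 1 => f (n + 1) ∘ traj f n

/-- The nonautonomous Birkhoff sum `S_n φ(x) = Σ_{j<n} φ(f_1^j x)`. -/
noncomputable def birkhoff (f : ℕ → X → X) (φ : X → ℝ) (n : ℕ) (x : X) : ℝ :=
  ∑ j ∈ Finset.range n, φ (traj f j x)

/-- The Bowen ball `B_n(x, δ)` for the nonautonomous system `f`. -/
def bowenBall (f : ℕ → X → X) (n : ℕ) (δ : ℝ) (x : X) : Set X :=
  {y | ∀ j < n, dist (traj f j x) (traj f j y) < δ}

/-- The Bowen metric `d_n(x,y) = max_{0 ≤ j ≤ n-1} d(f_1^j x, f_1^j y)`. -/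
noncomputable def dnDist (f : ℕ → X → X) (n : ℕ) (x y : X) : ℝ :=
  (((Finset.range n).sup fun j => nndist (traj f j x) (traj f j y) : ℝ≥0) : ℝ)

/-- Admissible string/ball lengths for the parameter `θ ∈ [0,1]`:
`N ≤ n` and `n < N/θ + 1` (no upper restriction when `θ = 0`). -/
def admissible (θ : ℝ) (N n : ℕ) : Prop :=
  N ≤ n ∧ (n : ℝ) * θ < N + θ

/-- Weight `exp(-α n + sup_{B_n(x,δ)} S_n φ)` of a Bowen ball, as an extended nonnegative real. -/
noncomputable def ballWeight (f : ℕ → X → X) (φ : X → ℝ) (α δ : ℝ) (p : X × ℕ) : ℝ≥0∞ :=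
  ENNReal.ofReal (Real.exp (-α * p.2 + sSup (birkhoff f φ p.2 '' bowenBall f p.2 δ p.1)))

/-- Weight `exp(-α n + S_n φ(x))` of a Bowen ball using the value at the center. -/
noncomputable def ballWeightC (f : ℕ → X → X) (φ : X → ℝ) (α : ℝ) (p : X × ℕ) : ℝ≥0∞ :=
  ENNReal.ofReal (Real.exp (-α * p.2 + birkhoff f φ p.2 p.1))

/-- The Carathéodory–Pesin set function `M(Z, α, φ, δ, N, θ)` defined via covers of `Z`
by Bowen balls of admissible lengths. -/
noncomputable def MBall (f : ℕ → X → X) (Z : Set X) (α : ℝ) (φ : X → ℝ) (δ : ℝ)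
    (N : ℕ) (θ : ℝ) : ℝ≥0∞ :=
  ⨅ (S : Set (X × ℕ)) (_ : S.Countable) (_ : ∀ p ∈ S, admissible θ N p.2)
    (_ : Z ⊆ ⋃ p ∈ S, bowenBall f p.2 δ p.1),
      ∑' p : S, ballWeight f φ α δ (p : X × ℕ)

/-- Variant of `MBall` where Birkhoff sums are evaluated at the centers of the balls. -/
noncomputable def MBallC (f : ℕ → X → X) (Z : Set X) (α : ℝ) (φ : X → ℝ) (δ : ℝ)
    (N : ℕ) (θ : ℝ) : ℝ≥0∞ :=
  ⨅ (S : Set (X × ℕ)) (_ : S.Countable) (_ : ∀ p ∈ S, admissible θ N p.2)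
    (_ : Z ⊆ ⋃ p ∈ S, bowenBall f p.2 δ p.1),
      ∑' p : S, ballWeightC f φ α (p : X × ℕ)

noncomputable def mLowerBall (f : ℕ → X → X) (Z : Set X) (α : ℝ) (φ : X → ℝ)
    (δ θ : ℝ) : ℝ≥0∞ :=
  liminf (fun N => MBall f Z α φ δ N θ) atTop

noncomputable def mUpperBall (f : ℕ → X → X) (Z : Set X) (α : ℝ) (φ : X → ℝ)
    (δ θ : ℝ) : ℝ≥0∞ :=
  limsup (fun N => MBall f Z α φ δ N θ) atTop

/-- Lower θ-intermediate topological pressure of `φ` on `Z` at scale `δ`. -/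
noncomputable def lowerPBall (f : ℕ → X → X) (Z : Set X) (φ : X → ℝ) (δ θ : ℝ) : ℝ :=
  sInf {α : ℝ | mLowerBall f Z α φ δ θ = 0}

/-- Upper θ-intermediate topological pressure of `φ` on `Z` at scale `δ`. -/
noncomputable def upperPBall (f : ℕ → X → X) (Z : Set X) (φ : X → ℝ) (δ θ : ℝ) : ℝ :=
  sInf {α : ℝ | mUpperBall f Z α φ δ θ = 0}

/-- Center variants of the pressures at scale `δ`. -/
noncomputable def lowerPBallC (f : ℕ → X → X) (Z : Set X) (φ : X → ℝ) (δ θ : ℝ) : ℝ :=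
  sInf {α : ℝ | liminf (fun N => MBallC f Z α φ δ N θ) atTop = 0}

noncomputable def upperPBallC (f : ℕ → X → X) (Z : Set X) (φ : X → ℝ) (δ θ : ℝ) : ℝ :=
  sInf {α : ℝ | limsup (fun N => MBallC f Z α φ δ N θ) atTop = 0}

/-- The lower θ-intermediate topological pressure `P̲(f, Z, φ, θ) = lim_{δ→0} P̲(f,Z,φ,δ,θ)`
(the limit exists; we take the `limsup` along `δ → 0⁺`, which equals it). -/
noncomputable def lowerP (f : ℕ → X → X) (Z : Set X) (φ : X → ℝ) (θ : ℝ) : ℝ :=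
  limsup (fun δ => lowerPBall f Z φ δ θ) (𝓝[>] (0 : ℝ))

/-- The upper θ-intermediate topological pressure `P̄(f, Z, φ, θ)`. -/
noncomputable def upperP (f : ℕ → X → X) (Z : Set X) (φ : X → ℝ) (θ : ℝ) : ℝ :=
  limsup (fun δ => upperPBall f Z φ δ θ) (𝓝[>] (0 : ℝ))

/-! ### String (open cover) version -/

/-- For a string `L = (U_0, …, U_{m-1})` of sets, the set
`X(L) = {x : f_1^j x ∈ U_j for all j < m}`. -/
def stringSet (f : ℕ → X → X) (L : List (Set X)) : Set X :=
  {x | ∀ j < L.length, traj f j x ∈ L.getD j ∅}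

/-- Weight of a string. -/
noncomputable def strWeight (f : ℕ → X → X) (φ : X → ℝ) (α : ℝ) (L : List (Set X)) : ℝ≥0∞ :=
  ENNReal.ofReal (Real.exp (-α * L.length + sSup (birkhoff f φ L.length '' stringSet f L)))

/-- The Carathéodory–Pesin set function defined via covers of `Z` by string sets coming
from the cover `𝒰`, with admissible string lengths. -/
noncomputable def MStr (f : ℕ → X → X) (Z : Set X) (α : ℝ) (φ : X → ℝ)
    (𝒰 : Finset (Set X)) (N : ℕ) (θ : ℝ) : ℝ≥0∞ :=
  ⨅ (G : Set (List (Set X))) (_ : G.Countable)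
    (_ : ∀ L ∈ G, (∀ U ∈ L, U ∈ 𝒰) ∧ admissible θ N L.length)
    (_ : Z ⊆ ⋃ L ∈ G, stringSet f L),
      ∑' L : G, strWeight f φ α (L : List (Set X))

/-- Lower θ-intermediate pressure relative to the open cover `𝒰`. -/
noncomputable def lowerPStr (f : ℕ → X → X) (Z : Set X) (φ : X → ℝ)
    (𝒰 : Finset (Set X)) (θ : ℝ) : ℝ :=
  sInf {α : ℝ | liminf (fun N => MStr f Z α φ 𝒰 N θ) atTop = 0}

/-- Upper θ-intermediate pressure relative to the open cover `𝒰`. -/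
noncomputable def upperPStr (f : ℕ → X → X) (Z : Set X) (φ : X → ℝ)
    (𝒰 : Finset (Set X)) (θ : ℝ) : ℝ :=
  sInf {α : ℝ | limsup (fun N => MStr f Z α φ 𝒰 N θ) atTop = 0}

/-- `𝒰` is a finite open cover of `X`. -/
def IsFinOpenCover (𝒰 : Finset (Set X)) : Prop :=
  (∀ U ∈ 𝒰, IsOpen U) ∧ ⋃₀ (𝒰 : Set (Set X)) = Set.univ

/-- The mesh `|𝒰|` of a cover: the maximal diameter of its elements. -/
noncomputable def coverDiam (𝒰 : Finset (Set X)) : ℝ :=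
  sSup (Metric.diam '' (𝒰 : Set (Set X)))

/-- The filter of finite open covers of vanishing mesh (`|𝒰| → 0`). -/
noncomputable def coverFilter (X : Type*) [MetricSpace X] :
    Filter {𝒰 : Finset (Set X) // IsFinOpenCover 𝒰} :=
  Filter.comap (fun 𝒰 => coverDiam 𝒰.1) (𝓝 (0 : ℝ))

/-- The open-cover definition of the lower θ-intermediate pressure:
`lim_{|𝒰|→0} P̲(f,Z,φ,𝒰,θ)` (as a `limsup` along the cover filter). -/
noncomputable def lowerPStrFull (f : ℕ → X → X) (Z : Set X) (φ : X → ℝ) (θ : ℝ) : ℝ :=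
  limsup (fun 𝒰 : {𝒰 : Finset (Set X) // IsFinOpenCover 𝒰} => lowerPStr f Z φ 𝒰.1 θ)
    (coverFilter X)

/-- The open-cover definition of the upper θ-intermediate pressure. -/
noncomputable def upperPStrFull (f : ℕ → X → X) (Z : Set X) (φ : X → ℝ) (θ : ℝ) : ℝ :=
  limsup (fun 𝒰 : {𝒰 : Finset (Set X) // IsFinOpenCover 𝒰} => upperPStr f Z φ 𝒰.1 θ)
    (coverFilter X)

/-! ### Measure-theoretic version -/

/-- `M_μ(f, α, φ, ε, N, θ)`: infimum over finite μ-covers by Bowen balls of admissible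
lengths of the total weight. -/
noncomputable def MMeas [MeasurableSpace X] (f : ℕ → X → X) (μ : Measure X) (α : ℝ)
    (φ : X → ℝ) (ε : ℝ) (N : ℕ) (θ : ℝ) : ℝ≥0∞ :=
  ⨅ (S : Finset (X × ℕ)) (_ : ∀ p ∈ S, admissible θ N p.2)
    (_ : μ (⋃ p ∈ S, bowenBall f p.2 ε p.1) = 1),
      ∑ p ∈ S, ballWeight f φ α ε p

noncomputable def lowerPMeasEps [MeasurableSpace X] (f : ℕ → X → X) (μ : Measure X)
    (φ : X → ℝ) (ε θ : ℝ) : ℝ :=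
  sInf {α : ℝ | liminf (fun N => MMeas f μ α φ ε N θ) atTop = 0}

noncomputable def upperPMeasEps [MeasurableSpace X] (f : ℕ → X → X) (μ : Measure X)
    (φ : X → ℝ) (ε θ : ℝ) : ℝ :=
  sInf {α : ℝ | limsup (fun N => MMeas f μ α φ ε N θ) atTop = 0}

/-- The lower θ-intermediate measure-theoretic pressure `P̲_μ(f, φ, θ)`. -/
noncomputable def lowerPMeas [MeasurableSpace X] (f : ℕ → X → X) (μ : Measure X)
    (φ : X → ℝ) (θ : ℝ) : ℝ :=
  limsup (fun ε => lowerPMeasEps f μ φ ε θ) (𝓝[>] (0 : ℝ))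

/-- The upper θ-intermediate measure-theoretic pressure `P̄_μ(f, φ, θ)`. -/
noncomputable def upperPMeas [MeasurableSpace X] (f : ℕ → X → X) (μ : Measure X)
    (φ : X → ℝ) (θ : ℝ) : ℝ :=
  limsup (fun ε => upperPMeasEps f μ φ ε θ) (𝓝[>] (0 : ℝ))

/-! ### Power system -/

/-- `compFrom f k n = f_{k+n} ∘ ⋯ ∘ f_{k+1}`. -/
def compFrom (f : ℕ → X → X) (k : ℕ) : ℕ → X → X
  | 0 => id
  | n + 1 => f (k + n + 1) ∘ compFrom f k n

/-- The `m`-th power system `f^m = {f_{(i-1)m+1}^{im}}_{i ≥ 1}`. -/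
def powerSeq (f : ℕ → X → X) (m : ℕ) : ℕ → X → X :=
  fun i => compFrom f ((i - 1) * m) m

section ClosureAux

variable {X : Type*} [MetricSpace X]

lemma traj_continuous (f : ℕ → X → X) (hf : ∀ i, Continuous (f i)) :
    ∀ j, Continuous (traj f j)
  | 0 => continuous_id
  | j + 1 => (hf (j + 1)).comp (traj_continuous f hf j)

lemma traj_unif [CompactSpace X] (f : ℕ → X → X) (hf : ∀ i, Continuous (f i)) (M : ℕ)
    {ε : ℝ} (hε : 0 < ε) :
    ∃ η > 0, ∀ x y : X, dist x y < η → ∀ j ≤ M, dist (traj f j x) (traj f j y) < ε := by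
  induction M with
  | zero =>
    exact ⟨ε, hε, fun x y h j hj => by
      interval_cases j
      simpa [traj] using h⟩
  | succ M ih =>
    obtain ⟨η₁, hη₁, h1⟩ := ih
    have huc : UniformContinuous (traj f (M + 1)) :=
      CompactSpace.uniformContinuous_of_continuous (traj_continuous f hf _)
    obtain ⟨η₂, hη₂, h2⟩ := Metric.uniformContinuous_iff.mp huc ε hε
    refine ⟨min η₁ η₂, lt_min hη₁ hη₂, fun x y h j hj => ?_⟩
    rcases Nat.lt_succ_iff_lt_or_eq.mp (Nat.lt_succ_of_le hj) with hj' | rfl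
    · exact h1 x y (h.trans_le (min_le_left _ _)) j (Nat.lt_succ_iff.mp hj')
    · exact h2 (h.trans_le (min_le_right _ _))

lemma abs_birkhoff_le (f : ℕ → X → X) (φ : X → ℝ) {C : ℝ} (hφ : ∀ x, |φ x| ≤ C)
    (n : ℕ) (x : X) : |birkhoff f φ n x| ≤ n * C := by
  calc |birkhoff f φ n x| ≤ ∑ j ∈ Finset.range n, |φ (traj f j x)| :=
        Finset.abs_sum_le_sum_abs _ _
    _ ≤ ∑ _j ∈ Finset.range n, C := Finset.sum_le_sum fun j _ => hφ _
    _ = n * C := by simp [mul_comm]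

lemma bddAbove_birkhoff_image (f : ℕ → X → X) (φ : X → ℝ) {C : ℝ} (hφ : ∀ x, |φ x| ≤ C)
    (n : ℕ) (A : Set X) : BddAbove (birkhoff f φ n '' A) := by
  refine ⟨n * C, ?_⟩
  rintro b ⟨y, -, rfl⟩
  exact (abs_le.mp (abs_birkhoff_le f φ hφ n y)).2

lemma self_mem_bowenBall (f : ℕ → X → X) (n : ℕ) {δ : ℝ} (hδ : 0 < δ) (x : X) :
    x ∈ bowenBall f n δ x := fun j _ => by simpa using hδ

lemma MBall_mono_set (f : ℕ → X → X) {Z Z' : Set X} (h : Z ⊆ Z') (α : ℝ) (φ : X → ℝ)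
    (δ : ℝ) (N : ℕ) (θ : ℝ) : MBall f Z α φ δ N θ ≤ MBall f Z' α φ δ N θ := by
  refine le_iInf fun S => le_iInf fun hc => le_iInf fun ha => le_iInf fun hcov => ?_
  exact iInf_le_of_le S (iInf_le_of_le hc (iInf_le_of_le ha
    (iInf_le (fun _ => ∑' p : S, ballWeight f φ α δ (p : X × ℕ)) (h.trans hcov))))

lemma one_le_MBall (f : ℕ → X → X) {Z : Set X} (hZ : Z.Nonempty) {α : ℝ} (φ : X → ℝ)
    {C : ℝ} (hφ : ∀ x, |φ x| ≤ C) (hα : α ≤ -C) (δ : ℝ) (N : ℕ) (θ : ℝ) :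
    1 ≤ MBall f Z α φ δ N θ := by
  refine le_iInf fun S => le_iInf fun hc => le_iInf fun ha => le_iInf fun hcov => ?_
  obtain ⟨z, hz⟩ := hZ
  obtain ⟨p, hpS, hp⟩ := Set.mem_iUnion₂.mp (hcov hz)
  have h1 : (1 : ℝ≥0∞) ≤ ballWeight f φ α δ p := by
    rw [ballWeight, ENNReal.one_le_ofReal]
    refine Real.one_le_exp ?_
    have hb : birkhoff f φ p.2 z ≤ sSup (birkhoff f φ p.2 '' bowenBall f p.2 δ p.1) :=
      le_csSup (bddAbove_birkhoff_image f φ hφ _ _) ⟨z, hp, rfl⟩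
    have hb2 : -((p.2 : ℝ) * C) ≤ birkhoff f φ p.2 z :=
      (abs_le.mp (abs_birkhoff_le f φ hφ _ z)).1
    have hn : (0 : ℝ) ≤ (p.2 : ℝ) := Nat.cast_nonneg _
    nlinarith
  exact h1.trans (ENNReal.le_tsum (⟨p, hpS⟩ : S))

lemma MBall_closure_le [CompactSpace X] (f : ℕ → X → X) (hf : ∀ i, Continuous (f i))
    (Z : Set X) (φ : X → ℝ) {C : ℝ} (hφ : ∀ x, |φ x| ≤ C)
    {δ' δ ε : ℝ} (hδ' : 0 < δ') (hδ : δ' < δ)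
    (hε : ∀ u v : X, dist u v < δ → φ u - φ v ≤ ε)
    (α : ℝ) (N : ℕ) {θ : ℝ} (hθ : 0 < θ) :
    MBall f (closure Z) α φ δ N θ ≤ MBall f Z (α - ε) φ δ' N θ := by
  refine le_iInf fun S => le_iInf fun hc => le_iInf fun ha => le_iInf fun hcov => ?_
  set Mb : ℕ := ⌊(N : ℝ) / θ⌋₊ + 1 with hMb
  have hnle : ∀ p ∈ S, p.2 ≤ Mb := by
    intro p hp
    have h2 : (p.2 : ℝ) * θ < N + θ := (ha p hp).2
    have h3 : (p.2 : ℝ) < (N : ℝ) / θ + 1 := by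
      have h3a : (p.2 : ℝ) - 1 < (N : ℝ) / θ := (lt_div_iff₀ hθ).mpr (by nlinarith)
      linarith
    have h4 : (N : ℝ) / θ < ⌊(N : ℝ) / θ⌋₊ + 1 :=
      Nat.lt_floor_add_one _
    have h5 : (p.2 : ℝ) < (Mb : ℝ) + 1 := by
      push_cast [hMb]; linarith
    exact_mod_cast Nat.lt_succ_iff.mp (by exact_mod_cast h5)
  obtain ⟨η, hη, hη2⟩ := traj_unif f hf Mb (sub_pos.mpr hδ)
  have hcov2 : closure Z ⊆ ⋃ p ∈ S, bowenBall f p.2 δ p.1 := by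
    intro y hy
    obtain ⟨z, hzZ, hdzy⟩ := Metric.mem_closure_iff.mp hy η hη
    obtain ⟨p, hpS, hpz⟩ := Set.mem_iUnion₂.mp (hcov hzZ)
    refine Set.mem_iUnion₂.mpr ⟨p, hpS, fun j hj => ?_⟩
    have h1 : dist (traj f j p.1) (traj f j z) < δ' := hpz j hj
    have h2 : dist (traj f j z) (traj f j y) < δ - δ' := by
      refine hη2 z y (by rwa [dist_comm]) j ?_
      exact le_trans (Nat.le_of_lt hj) (hnle p hpS)
    calc dist (traj f j p.1) (traj f j y)
        ≤ dist (traj f j p.1) (traj f j z) + dist (traj f j z) (traj f j y) :=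
          dist_triangle _ _ _
      _ < δ' + (δ - δ') := add_lt_add h1 h2
      _ = δ := by ring
  refine le_trans (iInf_le_of_le S (iInf_le_of_le hc (iInf_le_of_le ha
    (iInf_le (fun _ => ∑' p : S, ballWeight f φ α δ (p : X × ℕ)) hcov2))))
    (ENNReal.tsum_le_tsum fun p => ?_)
  obtain ⟨⟨x, n⟩, hpmem⟩ := p
  rw [ballWeight, ballWeight]
  refine ENNReal.ofReal_le_ofReal (Real.exp_le_exp.mpr ?_)
  simp only
  have hxδ : x ∈ bowenBall f n δ x := self_mem_bowenBall f n (hδ'.trans hδ) x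
  have hxδ' : x ∈ bowenBall f n δ' x := self_mem_bowenBall f n hδ' x
  have hbdd' : BddAbove (birkhoff f φ n '' bowenBall f n δ' x) :=
    bddAbove_birkhoff_image f φ hφ n _
  have key : sSup (birkhoff f φ n '' bowenBall f n δ x)
      ≤ ε * n + sSup (birkhoff f φ n '' bowenBall f n δ' x) := by
    refine csSup_le ⟨_, ⟨x, hxδ, rfl⟩⟩ ?_
    rintro b ⟨y, hy, rfl⟩
    have h1 : birkhoff f φ n y ≤ birkhoff f φ n x + ε * n := by
      have hsum : ∀ j ∈ Finset.range n, φ (traj f j y) ≤ φ (traj f j x) + ε := by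
        intro j hj
        have hd : dist (traj f j y) (traj f j x) < δ := by
          rw [dist_comm]; exact hy j (Finset.mem_range.mp hj)
        have := hε (traj f j y) (traj f j x) hd
        linarith
      calc birkhoff f φ n y ≤ ∑ j ∈ Finset.range n, (φ (traj f j x) + ε) :=
            Finset.sum_le_sum hsum
        _ = birkhoff f φ n x + ε * n := by
          rw [Finset.sum_add_distrib, birkhoff]; simp [mul_comm]
    have h2 : birkhoff f φ n x ≤ sSup (birkhoff f φ n '' bowenBall f n δ' x) :=
      le_csSup hbdd' ⟨x, hxδ', rfl⟩
    linarith
  have hn : (0 : ℝ) ≤ (n : ℝ) := Nat.cast_nonneg _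
  nlinarith [key]

end ClosureAux

section ClosureMain

lemma closure_limsup_eq (m₁ m₂ : ℝ → ℝ → ℝ≥0∞) (C : ℝ) (hC : 0 ≤ C)
    (hmono : ∀ δ α, m₁ δ α ≤ m₂ δ α)
    (hbig : ∀ δ α, α ≤ -C → 1 ≤ m₁ δ α)
    (hshift : ∀ ε : ℝ, 0 < ε → ∃ δ₀ > 0, ∀ δ' δ α, 0 < δ' → δ' < δ → δ < δ₀ →
      m₂ δ α ≤ m₁ δ' (α - ε))
    (hshiftC : ∀ δ' δ α, 0 < δ' → δ' < δ → m₂ δ α ≤ m₁ δ' (α - (2 * C + 1))) :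
    limsup (fun δ => sInf {α | m₂ δ α = 0}) (𝓝[>] (0 : ℝ)) =
      limsup (fun δ => sInf {α | m₁ δ α = 0}) (𝓝[>] (0 : ℝ)) := by
  set L := 𝓝[>] (0 : ℝ) with hL
  set A₁ : ℝ → Set ℝ := fun δ => {α | m₁ δ α = 0} with hA₁
  set A₂ : ℝ → Set ℝ := fun δ => {α | m₂ δ α = 0} with hA₂
  set g : ℝ → ℝ := fun δ => sInf (A₁ δ) with hg
  set h : ℝ → ℝ := fun δ => sInf (A₂ δ) with hh
  have hsub : ∀ δ, A₂ δ ⊆ A₁ δ := by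
    intro δ α h2
    exact le_antisymm (le_trans (hmono δ α) (le_of_eq h2)) zero_le
  have hlb1 : ∀ δ α, α ∈ A₁ δ → -C ≤ α := by
    intro δ α hα
    by_contra hcon
    have h1 : (1 : ℝ≥0∞) ≤ m₁ δ α := hbig δ α (by linarith [not_le.mp hcon])
    rw [hα] at h1
    simp at h1
  have hbdd1 : ∀ δ, BddBelow (A₁ δ) := fun δ => ⟨-C, fun α hα => hlb1 δ α hα⟩
  have hbdd2 : ∀ δ, BddBelow (A₂ δ) := fun δ => (hbdd1 δ).mono (hsub δ)
  have hg_lb : ∀ δ, -C ≤ g δ := by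
    intro δ
    rcases (A₁ δ).eq_empty_or_nonempty with he | hne
    · rw [hg]; simp only [he, Real.sInf_empty]; linarith
    · exact le_csInf hne fun α hα => hlb1 δ α hα
  have hh_lb : ∀ δ, -C ≤ h δ := by
    intro δ
    rcases (A₂ δ).eq_empty_or_nonempty with he | hne
    · rw [hh]; simp only [he, Real.sInf_empty]; linarith
    · exact le_csInf hne fun α hα => hlb1 δ α (hsub δ hα)
  by_cases hE : ∀ δ, 0 < δ → (A₂ δ).Nonempty
  · -- nondegenerate case
    have hgh : ∀ δ, 0 < δ → g δ ≤ h δ := fun δ hδ =>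
      csInf_le_csInf (hbdd1 δ) (hE δ hδ) (hsub δ)
    rw [limsup_eq, limsup_eq]
    set Ug : Set ℝ := {a | ∀ᶠ δ in L, g δ ≤ a} with hUg'
    set Uh : Set ℝ := {a | ∀ᶠ δ in L, h δ ≤ a} with hUh'
    have hev_pos : ∀ᶠ δ in L, (0 : ℝ) < δ := eventually_of_mem self_mem_nhdsWithin fun δ hδ => hδ
    have hUhg : Uh ⊆ Ug := by
      intro a ha
      filter_upwards [ha, hev_pos] with δ h1 h2
      exact (hgh δ h2).trans h1
    have hstep : ∀ ε : ℝ, 0 < ε → ∀ a ∈ Ug, a + ε ∈ Uh := by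
      intro ε hε a ha
      obtain ⟨δ₀, hδ₀, hs⟩ := hshift ε hε
      rw [hUg', Set.mem_setOf_eq, hL, eventually_nhdsWithin_iff] at ha
      obtain ⟨r, hr, har⟩ := Metric.eventually_nhds_iff_ball.mp ha
      have : Ioo (0 : ℝ) (min δ₀ r) ∈ L :=
        Ioo_mem_nhdsGT_of_mem (by simp [hδ₀, hr])
      refine eventually_of_mem this ?_
      rintro δ ⟨hδpos, hδlt⟩
      have hδδ₀ : δ < δ₀ := hδlt.trans_le (min_le_left _ _)
      have hhalfpos : 0 < δ / 2 := by linarith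
      have hghalf : g (δ / 2) ≤ a := by
        refine har (δ / 2) ?_ hhalfpos
        have hδr : δ < r := hδlt.trans_le (min_le_right _ _)
        simp only [Metric.mem_ball, Real.dist_eq, sub_zero, abs_of_pos hhalfpos]
        linarith
      have hA1 : (A₁ (δ / 2)).Nonempty := (hE (δ / 2) hhalfpos).mono (hsub _)
      have hkey : ∀ α ∈ A₁ (δ / 2), h δ ≤ α + ε := by
        intro α hα
        have hm : m₂ δ (α + ε) ≤ m₁ (δ / 2) (α + ε - ε) :=
          hs (δ / 2) δ (α + ε) hhalfpos (by linarith) hδδ₀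
        rw [add_sub_cancel_right] at hm
        have : α + ε ∈ A₂ δ := le_antisymm (hm.trans (le_of_eq hα)) zero_le
        exact csInf_le (hbdd2 δ) this
      have : h δ - ε ≤ g (δ / 2) :=
        le_csInf hA1 fun α hα => by linarith [hkey α hα]
      show h δ ≤ a + ε
      linarith
    have hbddUg : BddBelow Ug := by
      refine ⟨-C, fun a ha => ?_⟩
      have ha' : ∀ᶠ δ in L, g δ ≤ a := ha
      obtain ⟨δ, hδ⟩ := ha'.exists
      linarith [hg_lb δ]
    have hbddUh : BddBelow Uh := by
      refine ⟨-C, fun a ha => ?_⟩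
      have ha' : ∀ᶠ δ in L, h δ ≤ a := ha
      obtain ⟨δ, hδ⟩ := ha'.exists
      linarith [hh_lb δ]
    rcases Uh.eq_empty_or_nonempty with hUh | hUh
    · have hUgE : Ug = ∅ := by
        rw [Set.eq_empty_iff_forall_notMem]
        intro a ha
        have := hstep 1 one_pos a ha
        rw [hUh] at this
        exact this
      rw [hUh, hUgE]
    · have hUgne : Ug.Nonempty := hUh.mono hUhg
      refine le_antisymm ?_ (csInf_le_csInf hbddUg hUh hUhg)
      refine le_of_forall_pos_le_add fun ε hε => ?_
      have h1 : ∀ a ∈ Ug, sInf Uh ≤ a + ε := fun a ha =>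
        csInf_le hbddUh (hstep ε hε a ha)
      have h2 : sInf Uh - ε ≤ sInf Ug :=
        le_csInf hUgne fun a ha => by linarith [h1 a ha]
      linarith
  · -- degenerate case
    push_neg at hE
    obtain ⟨δ₀, hδ₀, hemp⟩ := hE
    have hzero : ∀ δ ∈ Ioo (0 : ℝ) δ₀, h δ = g δ := by
      rintro δ ⟨hδpos, hδlt⟩
      have hA1e : A₁ δ = ∅ := by
        rw [Set.eq_empty_iff_forall_notMem]
        intro α hα
        have hm : m₂ δ₀ (α + (2 * C + 1)) ≤ m₁ δ (α + (2 * C + 1) - (2 * C + 1)) :=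
          hshiftC δ δ₀ (α + (2 * C + 1)) hδpos hδlt
        rw [add_sub_cancel_right] at hm
        have : α + (2 * C + 1) ∈ A₂ δ₀ :=
          le_antisymm (hm.trans (le_of_eq hα)) zero_le
        rw [hemp] at this
        exact this
      have hA2e : A₂ δ = ∅ :=
        Set.eq_empty_of_subset_empty (hA1e ▸ hsub δ)
      rw [hh, hg]
      simp only [hA1e, hA2e]
    refine limsup_congr ?_
    refine eventually_of_mem (Ioo_mem_nhdsGT_of_mem (by simp [hδ₀]) : Ioo (0:ℝ) δ₀ ∈ L) ?_
    exact hzero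

end ClosureMain


/-- for `θ ∈ (0,1]` the θ-intermediate pressures of the closure of `Z`
equal those of `Z`. -/
theorem pressure_closure_eq {X : Type*} [MetricSpace X] [CompactSpace X]
    (f : ℕ → X → X) (hf : ∀ i, Continuous (f i))
    (Z : Set X) (φ : C(X, ℝ)) (θ : ℝ) (hθ0 : 0 < θ) (hθ1 : θ ≤ 1) :
    lowerP f (closure Z) (⇑φ) θ = lowerP f Z (⇑φ) θ ∧
    upperP f (closure Z) (⇑φ) θ = upperP f Z (⇑φ) θ := by
  rcases Z.eq_empty_or_nonempty with rfl | hZne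
  · rw [closure_empty]; exact ⟨rfl, rfl⟩
  have hφb : ∀ x, |φ x| ≤ ‖φ‖ := fun x => by
    simpa [Real.norm_eq_abs] using φ.norm_coe_le_norm x
  set C : ℝ := ‖φ‖ with hCdef
  have hC : 0 ≤ C := norm_nonneg φ
  have hucφ : ∀ ε : ℝ, 0 < ε → ∃ δ₀ > 0, ∀ δ : ℝ, δ < δ₀ →
      ∀ u v : X, dist u v < δ → φ u - φ v ≤ ε := by
    intro ε hε
    obtain ⟨δ₀, hδ₀, hd⟩ := Metric.uniformContinuous_iff.mp
      (CompactSpace.uniformContinuous_of_continuous φ.continuous) ε hε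
    refine ⟨δ₀, hδ₀, fun δ hδ u v huv => ?_⟩
    have h2 : dist (φ u) (φ v) < ε := hd (huv.trans hδ)
    rw [Real.dist_eq] at h2
    linarith [le_abs_self (φ u - φ v)]
  have hεC : ∀ δ : ℝ, ∀ u v : X, dist u v < δ → φ u - φ v ≤ 2 * C + 1 := by
    intro δ u v _
    have h1 := hφb u; have h2 := hφb v
    have := abs_le.mp h1; have := abs_le.mp h2
    cases abs_le.mp h1 with | intro a b => cases abs_le.mp h2 with | intro c d => linarith
  have h2C : (0 : ℝ) < 2 * C + 1 := by linarith
  constructor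
  · have key := closure_limsup_eq (fun δ α => mLowerBall f Z α (⇑φ) δ θ)
      (fun δ α => mLowerBall f (closure Z) α (⇑φ) δ θ) C hC
      (fun δ α => liminf_le_liminf (Eventually.of_forall fun N =>
        MBall_mono_set f subset_closure α (⇑φ) δ N θ))
      (fun δ α hα => le_liminf_of_le (by isBoundedDefault) (Eventually.of_forall fun N =>
        one_le_MBall f hZne (⇑φ) hφb hα δ N θ))
      (by
        intro ε hε
        obtain ⟨δ₀, hδ₀, hd⟩ := hucφ ε hε
        refine ⟨δ₀, hδ₀, fun δ' δ α h1 h2 h3 => ?_⟩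
        exact liminf_le_liminf (Eventually.of_forall fun N =>
          MBall_closure_le f hf Z (⇑φ) hφb h1 h2 (hd δ h3) α N hθ0))
      (fun δ' δ α h1 h2 => liminf_le_liminf (Eventually.of_forall fun N =>
        MBall_closure_le f hf Z (⇑φ) hφb h1 h2 (hεC δ) α N hθ0))
    simpa [lowerP, lowerPBall, mLowerBall] using key
  · have key := closure_limsup_eq (fun δ α => mUpperBall f Z α (⇑φ) δ θ)
      (fun δ α => mUpperBall f (closure Z) α (⇑φ) δ θ) C hC
      (fun δ α => limsup_le_limsup (Eventually.of_forall fun N =>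
        MBall_mono_set f subset_closure α (⇑φ) δ N θ))
      (fun δ α hα => le_trans (le_liminf_of_le (by isBoundedDefault)
        (Eventually.of_forall fun N => one_le_MBall f hZne (⇑φ) hφb hα δ N θ))
        liminf_le_limsup)
      (by
        intro ε hε
        obtain ⟨δ₀, hδ₀, hd⟩ := hucφ ε hε
        refine ⟨δ₀, hδ₀, fun δ' δ α h1 h2 h3 => ?_⟩
        exact limsup_le_limsup (Eventually.of_forall fun N =>
          MBall_closure_le f hf Z (⇑φ) hφb h1 h2 (hd δ h3) α N hθ0))
      (fun δ' δ α h1 h2 => limsup_le_limsup (Eventually.of_forall fun N =>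
        MBall_closure_le f hf Z (⇑φ) hφb h1 h2 (hεC δ) α N hθ0))
    simpa [upperP, upperPBall, mUpperBall] using key


end NDSPressure
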